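/- (Hanson–Wright moment inequality for Rademacher chaos) There exists a universal constant C > 0 such that for every positive integer n, every symmetric matrix B ∈ ℝ^{n×n}, and every integer l ≥ 2, if z is uniformly distributed on {-1, +1}^n (i.e., the coordinates z_1, …, z_n are independent uniform ±1 random variables), then E[ |zᵀ B z − tr(B)|^l ] ≤ C^l · max{ √l · ‖B‖_F , l · ‖B‖₂ }^l. -/

import Mathlib

/-- The Frobenius norm `‖B‖_F = sqrt (Σ_{i,j} B i j ^ 2)` of a real square matrix. -/
noncomputable def frobNorm {n : ℕ} (B : Matrix (Fin n) (Fin n) ℝ) : ℝ :=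
  Real.sqrt (∑ i, ∑ j, (B i j) ^ 2)

/-- The spectral norm `‖B‖₂ = sup_{‖x‖₂ = 1} ‖Bx‖₂` of a real square matrix, i.e. the
operator norm of the induced map on Euclidean space. -/
noncomputable def specNorm {n : ℕ} (B : Matrix (Fin n) (Fin n) ℝ) : ℝ :=
  ‖LinearMap.toContinuousLinearMap (Matrix.toEuclideanLin B)‖


open Matrix

set_option maxHeartbeats 1000000

lemma spec_nonneg {n : ℕ} (B : Matrix (Fin n) (Fin n) ℝ) : 0 ≤ specNorm B := norm_nonneg _

lemma mulVec_sq_le {n : ℕ} (B : Matrix (Fin n) (Fin n) ℝ) (v : Fin n → ℝ) :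
    ∑ i, (B.mulVec v i)^2 ≤ (specNorm B)^2 * ∑ i, (v i)^2 := by
  have h := (LinearMap.toContinuousLinearMap (Matrix.toEuclideanLin B)).le_opNorm
      ((WithLp.equiv 2 (Fin n → ℝ)).symm v)
  rw [LinearMap.coe_toContinuousLinearMap'] at h
  change ‖(WithLp.equiv 2 (Fin n → ℝ)).symm (B.mulVec v)‖ ≤ _ at h
  have h1 : ‖(WithLp.equiv 2 (Fin n → ℝ)).symm (B.mulVec v)‖ = Real.sqrt (∑ i, (B.mulVec v i)^2) := by
    rw [EuclideanSpace.norm_eq]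
    congr 1; apply Finset.sum_congr rfl; intro i _
    simp [sq_abs]
  have h2 : ‖(WithLp.equiv 2 (Fin n → ℝ)).symm v‖ = Real.sqrt (∑ i, (v i)^2) := by
    rw [EuclideanSpace.norm_eq]
    congr 1; apply Finset.sum_congr rfl; intro i _
    simp [sq_abs]
  rw [h1, h2] at h
  have h3 : Real.sqrt (∑ i, (B.mulVec v i)^2) ^ 2 ≤ (specNorm B * Real.sqrt (∑ i, (v i)^2))^2 := by
    apply pow_le_pow_left₀ (Real.sqrt_nonneg _) h
  rwa [Real.sq_sqrt (by positivity), mul_pow, Real.sq_sqrt (by positivity)] at h3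

lemma spec_le_of_bound {n : ℕ} (B : Matrix (Fin n) (Fin n) ℝ) (r : ℝ) (hr : 0 ≤ r)
    (h : ∀ v : Fin n → ℝ, ∑ i, (B.mulVec v i)^2 ≤ r^2 * ∑ i, (v i)^2) :
    specNorm B ≤ r := by
  apply ContinuousLinearMap.opNorm_le_bound _ hr
  intro x
  rw [LinearMap.coe_toContinuousLinearMap']
  set v := (WithLp.equiv 2 (Fin n → ℝ)) x with hv
  have hx : x = (WithLp.equiv 2 (Fin n → ℝ)).symm v := rfl
  rw [hx]
  change ‖(WithLp.equiv 2 (Fin n → ℝ)).symm (B.mulVec v)‖ ≤ _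
  have h1 : ‖(WithLp.equiv 2 (Fin n → ℝ)).symm (B.mulVec v)‖ = Real.sqrt (∑ i, (B.mulVec v i)^2) := by
    rw [EuclideanSpace.norm_eq]; congr 1; apply Finset.sum_congr rfl; intro i _; simp [sq_abs]
  have h2 : ‖(WithLp.equiv 2 (Fin n → ℝ)).symm v‖ = Real.sqrt (∑ i, (v i)^2) := by
    rw [EuclideanSpace.norm_eq]; congr 1; apply Finset.sum_congr rfl; intro i _; simp [sq_abs]
  rw [h1, ← hx, hx, h2]
  calc Real.sqrt (∑ i, (B.mulVec v i)^2) ≤ Real.sqrt (r^2 * ∑ i, (v i)^2) :=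
        Real.sqrt_le_sqrt (h v)
    _ = r * Real.sqrt (∑ i, (v i)^2) := by
        rw [Real.sqrt_mul (by positivity), Real.sqrt_sq hr]

lemma spec_mul_le {n : ℕ} (A B : Matrix (Fin n) (Fin n) ℝ) :
    specNorm (A * B) ≤ specNorm A * specNorm B := by
  apply spec_le_of_bound _ _ (mul_nonneg (spec_nonneg A) (spec_nonneg B))
  intro v
  rw [← Matrix.mulVec_mulVec]
  calc ∑ i, (A.mulVec (B.mulVec v) i)^2 ≤ (specNorm A)^2 * ∑ i, ((B.mulVec v) i)^2 :=
        mulVec_sq_le A _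
    _ ≤ (specNorm A)^2 * ((specNorm B)^2 * ∑ i, (v i)^2) := by
        apply mul_le_mul_of_nonneg_left (mulVec_sq_le B v) (by positivity)
    _ = (specNorm A * specNorm B)^2 * ∑ i, (v i)^2 := by ring

lemma spec_transpose_le {n : ℕ} (A : Matrix (Fin n) (Fin n) ℝ) :
    specNorm Aᵀ ≤ specNorm A := by
  apply spec_le_of_bound _ _ (spec_nonneg A)
  intro v
  set w := Aᵀ.mulVec v with hw
  have hwi : ∀ i, w i = ∑ j, A j i * v j := by
    intro i; simp [hw, Matrix.mulVec, dotProduct, Matrix.transpose_apply]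
  have key : ∑ i, (w i)^2 = ∑ j, v j * (A.mulVec w) j := by
    calc ∑ i, (w i)^2 = ∑ i, ∑ j, A j i * v j * w i := by
          apply Finset.sum_congr rfl; intro i _
          rw [sq]; nth_rewrite 1 [hwi i]
          rw [Finset.sum_mul]
      _ = ∑ j, ∑ i, A j i * v j * w i := Finset.sum_comm
      _ = ∑ j, v j * (A.mulVec w) j := by
          apply Finset.sum_congr rfl; intro j _
          simp only [Matrix.mulVec, dotProduct]
          rw [Finset.mul_sum]
          apply Finset.sum_congr rfl; intro i _; ring
  have cs : (∑ j, v j * (A.mulVec w) j)^2 ≤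
      (∑ j, (v j)^2) * (∑ j, ((A.mulVec w) j)^2) :=
    Finset.sum_mul_sq_le_sq_mul_sq Finset.univ v (A.mulVec w)
  have h2 : (∑ j, ((A.mulVec w) j)^2) ≤ (specNorm A)^2 * ∑ i, (w i)^2 := mulVec_sq_le A w
  have h3 : (∑ i, (w i)^2)^2 ≤ (∑ j, (v j)^2) * ((specNorm A)^2 * ∑ i, (w i)^2) := by
    have e1 : (∑ i, (w i)^2)^2 = (∑ j, v j * (A.mulVec w) j)^2 := by rw [key]
    rw [e1]
    calc (∑ j, v j * (A.mulVec w) j)^2 ≤ (∑ j, (v j)^2) * (∑ j, ((A.mulVec w) j)^2) := cs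
      _ ≤ (∑ j, (v j)^2) * ((specNorm A)^2 * ∑ i, (w i)^2) := by
          apply mul_le_mul_of_nonneg_left h2 (by positivity)
  rcases eq_or_lt_of_le (show (0:ℝ) ≤ ∑ i, (w i)^2 by positivity) with h0 | h0
  · rw [← h0]; positivity
  · nlinarith [h3, h0]

def zz (x : Bool) : ℝ := if x then 1 else -1

lemma zz_sq (x : Bool) : zz x * zz x = 1 := by cases x <;> norm_num [zz]
lemma zz_not (x : Bool) : zz (!x) = - zz x := by cases x <;> norm_num [zz]
lemma zz_pow_even (x : Bool) (t : ℕ) : zz x ^ (2*t) = 1 := by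
  rw [pow_mul]; rw [sq, zz_sq, one_pow]
lemma zz_pow_odd (x : Bool) (m : ℕ) (hm : ¬ Even m) : zz x ^ m = zz x := by
  obtain ⟨t, rfl⟩ := Nat.not_even_iff_odd.mp hm
  rw [pow_succ, pow_mul, sq, zz_sq, one_pow, one_mul]

variable {n : ℕ}

noncomputable def Exp (f : (Fin n → Bool) → ℝ) : ℝ := (∑ b, f b) / 2^n

lemma card_cube : (Finset.univ : Finset (Fin n → Bool)).card = 2^n := by
  simp [Fintype.card_fun]

lemma Exp_const (r : ℝ) : Exp (fun _ : Fin n → Bool => r) = r := by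
  rw [Exp, Finset.sum_const, card_cube, nsmul_eq_mul]
  field_simp
  push_cast; ring

lemma Exp_mono {f g : (Fin n → Bool) → ℝ} (h : ∀ b, f b ≤ g b) : Exp f ≤ Exp g := by
  rw [Exp, Exp]
  apply (div_le_div_iff_of_pos_right (by positivity)).mpr
  exact Finset.sum_le_sum (fun b _ => h b)

lemma Exp_nonneg {f : (Fin n → Bool) → ℝ} (h : ∀ b, 0 ≤ f b) : 0 ≤ Exp f := by
  have h0 : (0:ℝ) = Exp (fun _ : Fin n → Bool => 0) := (Exp_const 0).symm
  rw [h0]; exact Exp_mono h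

lemma Exp_le_of_forall {f : (Fin n → Bool) → ℝ} {r : ℝ} (h : ∀ b, f b ≤ r) : Exp f ≤ r := by
  have := Exp_mono (g := fun _ : Fin n → Bool => r) h
  rwa [Exp_const] at this

lemma Exp_smul (c : ℝ) (f : (Fin n → Bool) → ℝ) : Exp (fun b => c * f b) = c * Exp f := by
  rw [Exp, Exp, ← Finset.mul_sum, mul_div_assoc]

lemma Exp_add (f g : (Fin n → Bool) → ℝ) : Exp (fun b => f b + g b) = Exp f + Exp g := by
  rw [Exp, Exp, Exp, Finset.sum_add_distrib, add_div]

lemma Exp_sum {α : Type*} (s : Finset α) (F : α → (Fin n → Bool) → ℝ) :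
    Exp (fun b => ∑ i ∈ s, F i b) = ∑ i ∈ s, Exp (F i) := by
  rw [Exp, Finset.sum_comm, Finset.sum_div]
  rfl

lemma sum_flip (a : Fin n) (f : (Fin n → Bool) → ℝ)
    (hf : ∀ b v, f (Function.update b a v) = f b) :
    Exp (fun b => zz (b a) * f b) = 0 := by
  have hinv : Function.Involutive (fun b : Fin n → Bool => Function.update b a (!b a)) := by
    intro b
    simp
  set σ := hinv.toPerm
  have h1 : ∑ b, zz (b a) * f b = ∑ b, zz (σ b a) * f (σ b) := (Equiv.sum_comp σ _).symm
  have h2 : ∀ b, zz (σ b a) * f (σ b) = - (zz (b a) * f b) := by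
    intro b
    have : σ b = Function.update b a (!b a) := rfl
    rw [this, hf, Function.update_self, zz_not]
    ring
  rw [Finset.sum_congr rfl (fun b _ => h2 b), Finset.sum_neg_distrib] at h1
  have : ∑ b, zz (b a) * f b = 0 := by linarith
  rw [Exp, this, zero_div]

def ddf : ℕ → ℕ
  | 0 => 1
  | (j+1) => (2*j+1) * ddf j

lemma ddf_pos (k : ℕ) : 0 < ddf k := by
  induction k with
  | zero => simp [ddf]
  | succ j ih => simp only [ddf]; positivity

lemma one_le_ddf (k : ℕ) : (1:ℝ) ≤ (ddf k : ℝ) := by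
  exact_mod_cast Nat.one_le_iff_ne_zero.mpr (ddf_pos k).ne'

lemma ddf_mul_eq (k : ℕ) : ddf k * (2^k * k.factorial) = (2*k).factorial := by
  induction k with
  | zero => simp [ddf]
  | succ j ih =>
    have h2 : 2*(j+1) = (2*j+1) + 1 := by ring
    rw [ddf, h2, Nat.factorial_succ, Nat.factorial_succ]
    have : (2*j+1) + 1 = 2*(j+1) := by omega
    calc (2*j+1) * ddf j * (2^(j+1) * ((j+1) * j.factorial))
        = ((2*j+1)+1) * ((2*j+1) * (ddf j * (2^j * j.factorial))) := by ring
      _ = ((2*j+1)+1) * ((2*j+1) * (2*j).factorial) := by rw [ih]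
      _ = ((2*j+1)+1) * (2*j+1).factorial := by rw [Nat.factorial_succ]

lemma ddf_cast (k : ℕ) : (ddf k : ℝ) = (2*k).factorial / (2^k * k.factorial) := by
  rw [eq_div_iff (by positivity)]
  exact_mod_cast congrArg (Nat.cast (R := ℝ)) (ddf_mul_eq k)

lemma ddf_le (k : ℕ) : (ddf k : ℝ) ≤ (2*k)^k := by
  induction k with
  | zero => simp [ddf]
  | succ j ih =>
    have : (ddf (j+1) : ℝ) = (2*j+1) * ddf j := by
      rw [ddf]; push_cast; ring
    rw [this]
    have hc : ((2*((j:ℕ)+1) : ℝ))^(j+1) = (2*((j:ℝ)+1))^(j+1) := by push_cast; ring_nf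
    calc (2*(j:ℝ)+1) * ddf j ≤ (2*(j+1)) * (2*j)^j := by
          apply mul_le_mul (by push_cast; linarith) ih (by positivity) (by positivity)
      _ ≤ (2*(j+1)) * (2*(j+1))^j := by
          apply mul_le_mul_of_nonneg_left (pow_le_pow_left₀ (by positivity) (by push_cast; linarith) j) (by positivity)
      _ = (2*((j:ℝ)+1))^(j+1) := by rw [pow_succ]; ring
      _ = ((2*(((j:ℕ)+1:ℕ)) : ℝ))^(j+1) := by push_cast; ring

-- key combinatorial inequality
lemma ddf_one : ddf 1 = 1 := rfl

lemma ddf_nonneg (k : ℕ) : (0:ℝ) ≤ (ddf k : ℝ) := Nat.cast_nonneg _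

lemma comb_key {t k : ℕ} (h : t ≤ k) :
    ((2*k).choose (2*t) : ℝ) * ddf (k - t) ≤ (ddf k : ℝ) * k.choose t := by
  obtain ⟨u, rfl⟩ : ∃ u, k = t + u := ⟨k - t, by omega⟩
  have hrw : t + u - t = u := by omega
  rw [hrw]
  have e1 : ((2*(t+u)).choose (2*t) : ℝ) = (2*(t+u)).factorial / ((2*t).factorial * (2*u).factorial) := by
    have : 2*(t+u) - 2*t = 2*u := by omega
    rw [Nat.cast_choose ℝ (by omega), this]
  have e2 : ((t+u).choose t : ℝ) = (t+u).factorial / (t.factorial * u.factorial) := by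
    have : t + u - t = u := by omega
    rw [Nat.cast_choose ℝ (by omega), this]
  have identity : ((2*(t+u)).choose (2*t) : ℝ) * ddf u * ddf t = (ddf (t+u) : ℝ) * (t+u).choose t := by
    rw [e1, e2, ddf_cast, ddf_cast, ddf_cast]
    rw [pow_add]
    field_simp
  have hddt : (1:ℝ) ≤ ddf t := one_le_ddf t
  have hpos : (0:ℝ) ≤ ((2*(t+u)).choose (2*t) : ℝ) * ddf u := by positivity
  calc ((2*(t+u)).choose (2*t) : ℝ) * ddf u
      = ((2*(t+u)).choose (2*t) : ℝ) * ddf u * 1 := by ring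
    _ ≤ ((2*(t+u)).choose (2*t) : ℝ) * ddf u * ddf t := by
        exact mul_le_mul_of_nonneg_left hddt hpos
    _ = (ddf (t+u) : ℝ) * (t+u).choose t := identity



lemma Exp_congr {f g : (Fin n → Bool) → ℝ} (h : ∀ b, f b = g b) : Exp f = Exp g := by
  have : f = g := funext h
  rw [this]

-- sum over even indices
lemma sum_range_even (k : ℕ) (F : ℕ → ℝ) (hodd : ∀ m, ¬ Even m → F m = 0) :
    ∑ m ∈ Finset.range (2*k+1), F m = ∑ t ∈ Finset.range (k+1), F (2*t) := by
  rw [← Finset.sum_filter_add_sum_filter_not (Finset.range (2*k+1)) (fun m => Even m) F]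
  have h2 : ∑ m ∈ (Finset.range (2*k+1)).filter (fun m => ¬ Even m), F m = 0 := by
    apply Finset.sum_eq_zero
    intro m hm
    exact hodd m (Finset.mem_filter.mp hm).2
  rw [h2, add_zero]
  apply Finset.sum_nbij' (fun m => m / 2) (fun t => 2 * t)
  · intro m hm
    simp only [Finset.mem_filter, Finset.mem_range] at hm
    simp only [Finset.mem_range]
    omega
  · intro t ht
    simp only [Finset.mem_range] at ht
    simp only [Finset.mem_filter, Finset.mem_range]
    constructor
    · omega
    · exact ⟨t, by omega⟩
  · intro m hm
    simp only [Finset.mem_filter, Finset.mem_range] at hm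
    obtain ⟨t, ht⟩ := hm.2
    omega
  · intro t ht; omega
  · intro m hm
    simp only [Finset.mem_filter, Finset.mem_range] at hm
    obtain ⟨t, ht⟩ := hm.2
    congr 1; omega

/-- Generalized Khintchine inequality over the cube. -/
lemma khintchine (k : ℕ) (s : Finset (Fin n)) (w : Fin n → (Fin n → Bool) → ℝ)
    (hw : ∀ i, ∀ a ∈ s, ∀ b v, w i (Function.update b a v) = w i b)
    (g : (Fin n → Bool) → ℝ) (hg : ∀ b, 0 ≤ g b)
    (hgc : ∀ a ∈ s, ∀ b v, g (Function.update b a v) = g b) :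
    Exp (fun b => g b * (∑ i ∈ s, w i b * zz (b i)) ^ (2*k))
      ≤ (ddf k : ℝ) * Exp (fun b => g b * (∑ i ∈ s, (w i b)^2) ^ k) := by
  induction s using Finset.induction_on generalizing k g with
  | empty =>
    simp only [Finset.sum_empty]
    cases k with
    | zero => simp only [Nat.mul_zero, pow_zero, mul_one]
              exact le_mul_of_one_le_left (Exp_nonneg hg) (one_le_ddf 0)
    | succ j =>
      rw [zero_pow (by omega), zero_pow (by omega)]
      simp only [mul_zero]
      rw [show (fun _ : Fin n → Bool => (0:ℝ)) = fun _ => (0:ℝ) from rfl]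
      have h1 : Exp (fun _ : Fin n → Bool => (0:ℝ)) = 0 := Exp_const 0
      rw [h1, mul_zero]
  | @insert a s₀ ha ih =>
    -- abbreviations
    have hsum : ∀ b, ∑ i ∈ insert a s₀, w i b * zz (b i)
        = w a b * zz (b a) + ∑ i ∈ s₀, w i b * zz (b i) := fun b => Finset.sum_insert ha
    have hsumsq : ∀ b, ∑ i ∈ insert a s₀, (w i b)^2 = (w a b)^2 + ∑ i ∈ s₀, (w i b)^2 :=
      fun b => Finset.sum_insert ha
    -- binomial expansion pointwise
    have expand : ∀ b, g b * (∑ i ∈ insert a s₀, w i b * zz (b i)) ^ (2*k)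
        = ∑ m ∈ Finset.range (2*k+1),
            g b * (w a b)^m * zz (b a)^m * (∑ i ∈ s₀, w i b * zz (b i))^(2*k - m)
              * ((2*k).choose m) := by
      intro b
      rw [hsum b, add_pow, Finset.mul_sum]
      apply Finset.sum_congr rfl
      intro m _
      rw [mul_pow]
      ring
    have step1 : Exp (fun b => g b * (∑ i ∈ insert a s₀, w i b * zz (b i)) ^ (2*k))
        = ∑ m ∈ Finset.range (2*k+1), Exp (fun b =>
            g b * (w a b)^m * zz (b a)^m * (∑ i ∈ s₀, w i b * zz (b i))^(2*k - m)
              * ((2*k).choose m)) := by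
      rw [Exp_congr expand, Exp_sum]
    -- odd terms vanish
    have hodd : ∀ m, ¬ Even m → Exp (fun b =>
        g b * (w a b)^m * zz (b a)^m * (∑ i ∈ s₀, w i b * zz (b i))^(2*k - m)
          * ((2*k).choose m)) = 0 := by
      intro m hm
      have : ∀ b, g b * (w a b)^m * zz (b a)^m * (∑ i ∈ s₀, w i b * zz (b i))^(2*k - m)
          * ((2*k).choose m)
          = zz (b a) * (g b * (w a b)^m * (∑ i ∈ s₀, w i b * zz (b i))^(2*k - m)
            * ((2*k).choose m)) := by
        intro b
        rw [zz_pow_odd _ _ hm]; ring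
      rw [Exp_congr this]
      apply sum_flip
      intro b v
      have h1 : g (Function.update b a v) = g b := hgc a (Finset.mem_insert_self a s₀) b v
      have h2 : w a (Function.update b a v) = w a b := hw a a (Finset.mem_insert_self a s₀) b v
      have h3 : (∑ i ∈ s₀, w i (Function.update b a v) * zz (Function.update b a v i))
          = ∑ i ∈ s₀, w i b * zz (b i) := by
        apply Finset.sum_congr rfl
        intro i hi
        have hia : i ≠ a := fun h => ha (h ▸ hi)
        rw [hw i a (Finset.mem_insert_self a s₀) b v, Function.update_of_ne hia]
      rw [h1, h2, h3]
    rw [step1, sum_range_even _ _ hodd]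
    -- rewrite each even term
    have heven : ∀ t ∈ Finset.range (k+1), Exp (fun b =>
        g b * (w a b)^(2*t) * zz (b a)^(2*t) * (∑ i ∈ s₀, w i b * zz (b i))^(2*k - 2*t)
          * ((2*k).choose (2*t)))
        ≤ (ddf k : ℝ) * (((k.choose t) : ℝ) * Exp (fun b =>
            (g b * (w a b)^(2*t)) * (∑ i ∈ s₀, (w i b)^2)^(k-t))) := by
      intro t ht
      rw [Finset.mem_range] at ht
      have ht' : t ≤ k := by omega
      have hgnn : ∀ b, 0 ≤ g b * (w a b)^(2*t) := by
        intro b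
        have : (0:ℝ) ≤ (w a b)^(2*t) := by
          rw [show 2*t = t*2 by ring, pow_mul]; positivity
        exact mul_nonneg (hg b) this
      have e1 : (fun b => g b * (w a b)^(2*t) * zz (b a)^(2*t)
            * (∑ i ∈ s₀, w i b * zz (b i))^(2*k - 2*t) * ((2*k).choose (2*t)))
          = fun b => ((2*k).choose (2*t) : ℝ) *
            ((g b * (w a b)^(2*t)) * (∑ i ∈ s₀, w i b * zz (b i))^(2*(k - t))) := by
        funext b
        rw [zz_pow_even, show 2*k - 2*t = 2*(k-t) by omega]
        ring
      rw [e1, Exp_smul]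
      have hihyp := ih (k - t)
        (fun i a' ha' => hw i a' (Finset.mem_insert_of_mem ha'))
        (fun b => g b * (w a b)^(2*t)) hgnn
        (by
          intro a' ha' b v
          show g (Function.update b a' v) * (w a (Function.update b a' v))^(2*t)
            = g b * (w a b)^(2*t)
          rw [hgc a' (Finset.mem_insert_of_mem ha') b v,
            hw a a' (Finset.mem_insert_of_mem ha') b v])
      have hEnn : (0:ℝ) ≤ Exp (fun b => (g b * (w a b)^(2*t)) * (∑ i ∈ s₀, (w i b)^2)^(k-t)) := by
        apply Exp_nonneg
        intro b
        apply mul_nonneg (hgnn b)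
        apply pow_nonneg
        positivity
      calc ((2*k).choose (2*t) : ℝ) * Exp (fun b =>
              (g b * (w a b)^(2*t)) * (∑ i ∈ s₀, w i b * zz (b i))^(2*(k - t)))
          ≤ ((2*k).choose (2*t) : ℝ) * ((ddf (k-t) : ℝ) * Exp (fun b =>
              (g b * (w a b)^(2*t)) * (∑ i ∈ s₀, (w i b)^2)^(k-t))) := by
            exact mul_le_mul_of_nonneg_left hihyp (by positivity)
        _ = (((2*k).choose (2*t) : ℝ) * (ddf (k-t) : ℝ)) * Exp (fun b =>
              (g b * (w a b)^(2*t)) * (∑ i ∈ s₀, (w i b)^2)^(k-t)) := by ring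
        _ ≤ ((ddf k : ℝ) * (k.choose t : ℝ)) * Exp (fun b =>
              (g b * (w a b)^(2*t)) * (∑ i ∈ s₀, (w i b)^2)^(k-t)) := by
            exact mul_le_mul_of_nonneg_right (comb_key ht') hEnn
        _ = (ddf k : ℝ) * (((k.choose t) : ℝ) * Exp (fun b =>
              (g b * (w a b)^(2*t)) * (∑ i ∈ s₀, (w i b)^2)^(k-t))) := by ring
    calc ∑ t ∈ Finset.range (k+1), Exp (fun b =>
            g b * (w a b)^(2*t) * zz (b a)^(2*t) * (∑ i ∈ s₀, w i b * zz (b i))^(2*k - 2*t)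
              * ((2*k).choose (2*t)))
        ≤ ∑ t ∈ Finset.range (k+1), (ddf k : ℝ) * (((k.choose t) : ℝ) * Exp (fun b =>
            (g b * (w a b)^(2*t)) * (∑ i ∈ s₀, (w i b)^2)^(k-t))) :=
          Finset.sum_le_sum heven
      _ = (ddf k : ℝ) * ∑ t ∈ Finset.range (k+1), Exp (fun b =>
            ((k.choose t) : ℝ) * ((g b * (w a b)^(2*t)) * (∑ i ∈ s₀, (w i b)^2)^(k-t))) := by
          rw [← Finset.mul_sum]
          congr 1
          apply Finset.sum_congr rfl
          intro t _
          rw [Exp_smul]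
      _ = (ddf k : ℝ) * Exp (fun b => ∑ t ∈ Finset.range (k+1),
            ((k.choose t) : ℝ) * ((g b * (w a b)^(2*t)) * (∑ i ∈ s₀, (w i b)^2)^(k-t))) := by
          rw [Exp_sum]
      _ = (ddf k : ℝ) * Exp (fun b => g b * (∑ i ∈ insert a s₀, (w i b)^2) ^ k) := by
          congr 1
          apply Exp_congr
          intro b
          rw [hsumsq b, add_pow, Finset.mul_sum]
          apply Finset.sum_congr rfl
          intro t _
          rw [← pow_mul]
          ring


noncomputable def Qf {n : ℕ} (B : Matrix (Fin n) (Fin n) ℝ) (b : Fin n → Bool) : ℝ :=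
  ∑ i, ∑ j, zz (b i) * (if i = j then 0 else B i j) * zz (b j)

noncomputable def F2 {n : ℕ} (B : Matrix (Fin n) (Fin n) ℝ) : ℝ := ∑ i, ∑ j, (B i j)^2

lemma F2_nonneg {n : ℕ} (B : Matrix (Fin n) (Fin n) ℝ) : 0 ≤ F2 B := by
  unfold F2; positivity

lemma Exp_zz_mul (i j : Fin n) (hij : i ≠ j) :
    Exp (fun b : Fin n → Bool => zz (b i) * zz (b j)) = 0 := by
  apply sum_flip i (fun b => zz (b j))
  intro b v
  rw [Function.update_of_ne (Ne.symm hij)]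

lemma Exp_zz (i : Fin n) : Exp (fun b : Fin n → Bool => zz (b i)) = 0 := by
  have := sum_flip i (fun _ => (1:ℝ)) (fun b v => rfl)
  simpa using this

lemma Exp_Qf_zero {n : ℕ} (M : Matrix (Fin n) (Fin n) ℝ) : Exp (Qf M) = 0 := by
  have h1 : Exp (Qf M) = ∑ i, ∑ j, Exp (fun b : Fin n → Bool =>
      zz (b i) * (if i = j then 0 else M i j) * zz (b j)) := by
    rw [show Qf M = fun b => ∑ i, ∑ j, zz (b i) * (if i = j then 0 else M i j) * zz (b j) from rfl,
      Exp_sum]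
    apply Finset.sum_congr rfl
    intro i _
    rw [Exp_sum]
  rw [h1]
  apply Finset.sum_eq_zero; intro i _
  apply Finset.sum_eq_zero; intro j _
  by_cases hij : i = j
  · subst hij
    rw [show (fun b : Fin n → Bool => zz (b i) * (if i = i then (0:ℝ) else M i i) * zz (b i))
      = fun _ => (0:ℝ) by funext b; simp, Exp_const]
  · have : (fun b : Fin n → Bool => zz (b i) * (if i = j then 0 else M i j) * zz (b j))
        = fun b => M i j * (zz (b i) * zz (b j)) := by
      funext b; rw [if_neg hij]; ring
    rw [this, Exp_smul, Exp_zz_mul i j hij, mul_zero]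

lemma jensen_even {n : ℕ} (f : (Fin n → Bool) → ℝ) (k : ℕ) (hk : 1 ≤ k) :
    (Exp f)^(2*k) ≤ Exp (fun b => (f b)^(2*k)) := by
  have h1 : |Exp f| ≤ Exp (fun b => |f b|) := by
    rw [Exp, Exp, abs_div, abs_of_nonneg (show (0:ℝ) ≤ 2^n by positivity)]
    apply (div_le_div_iff_of_pos_right (by positivity)).mpr
    exact Finset.abs_sum_le_sum_abs f Finset.univ
  have h2 : (Exp (fun b => |f b|))^(2*k) ≤ Exp (fun b => |f b|^(2*k)) := by
    obtain ⟨m, hm⟩ : ∃ m, 2*k = m + 1 := ⟨2*k - 1, by omega⟩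
    rw [hm]
    have key := pow_sum_div_card_le_sum_pow (f := fun b : Fin n → Bool => |f b|)
      (s := Finset.univ) (fun b _ => abs_nonneg _) m
    rw [card_cube] at key
    have hcast : (((2:ℕ)^n : ℕ) : ℝ) = (2:ℝ)^n := by push_cast; ring
    rw [hcast] at key
    have h3 : (∑ b, |f b|)^(m+1) ≤ (∑ b, |f b|^(m+1)) * ((2:ℝ)^n)^m := by
      rw [div_le_iff₀ (by positivity)] at key
      linarith [key]
    rw [Exp, Exp, div_pow]
    rw [div_le_div_iff₀ (by positivity) (by positivity)]
    calc (∑ b, |f b|)^(m+1) * (2:ℝ)^n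
        ≤ ((∑ b, |f b|^(m+1)) * ((2:ℝ)^n)^m) * (2:ℝ)^n :=
          mul_le_mul_of_nonneg_right h3 (by positivity)
      _ = (∑ b, |f b|^(m+1)) * ((2:ℝ)^n)^(m+1) := by rw [pow_succ]; ring
  calc (Exp f)^(2*k) = |Exp f|^(2*k) :=
        (Even.pow_abs (⟨k, by ring⟩ : Even (2*k)) _).symm
    _ ≤ (Exp (fun b => |f b|))^(2*k) := by
        apply pow_le_pow_left₀ (abs_nonneg _) h1
    _ ≤ Exp (fun b => |f b|^(2*k)) := h2
    _ = Exp (fun b => (f b)^(2*k)) := by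
        apply Exp_congr; intro b
        exact Even.pow_abs (⟨k, by ring⟩ : Even (2*k)) _

lemma Exp_swap {n : ℕ} (F : (Fin n → Bool) → (Fin n → Bool) → ℝ) :
    Exp (fun b => Exp (fun c => F c b)) = Exp (fun c => Exp (fun b => F c b)) := by
  unfold Exp
  simp only [← Finset.sum_div]
  rw [Finset.sum_comm]

lemma Exp_CS {n : ℕ} (u v : (Fin n → Bool) → ℝ) :
    (Exp (fun b => u b * v b))^2 ≤ Exp (fun b => (u b)^2) * Exp (fun b => (v b)^2) := by
  unfold Exp
  rw [div_pow, div_mul_div_comm, ← sq ((2:ℝ)^n)]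
  apply (div_le_div_iff_of_pos_right (by positivity)).mpr
  exact Finset.sum_mul_sq_le_sq_mul_sq Finset.univ u v

lemma pow_add_le (x y : ℝ) (k : ℕ) : (x + y)^k ≤ 2^k * (|x|^k + |y|^k) := by
  calc (x+y)^k ≤ |(x+y)^k| := le_abs_self _
    _ = |x+y|^k := (abs_pow _ _)
    _ ≤ (|x|+|y|)^k := pow_le_pow_left₀ (abs_nonneg _) (abs_add_le x y) k
    _ ≤ 2^k * (|x|^k + |y|^k) := by
        rcases le_total |x| |y| with h | h
        · calc (|x|+|y|)^k ≤ (2*|y|)^k := pow_le_pow_left₀ (by positivity) (by linarith) k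
            _ = 2^k * |y|^k := by rw [mul_pow]
            _ ≤ 2^k * (|x|^k + |y|^k) := by
                apply mul_le_mul_of_nonneg_left ?_ (by positivity)
                nlinarith [pow_nonneg (abs_nonneg x) k]
        · calc (|x|+|y|)^k ≤ (2*|x|)^k := pow_le_pow_left₀ (by positivity) (by linarith) k
            _ = 2^k * |x|^k := by rw [mul_pow]
            _ ≤ 2^k * (|x|^k + |y|^k) := by
                apply mul_le_mul_of_nonneg_left ?_ (by positivity)
                nlinarith [pow_nonneg (abs_nonneg y) k]




noncomputable def Atil {n : ℕ} (B : Matrix (Fin n) (Fin n) ℝ) (c : Fin n → Bool) :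
    Matrix (Fin n) (Fin n) ℝ :=
  Matrix.of fun i j => (if c i then (1:ℝ) else 0) * B i j * (if c j then (0:ℝ) else 1)

lemma Atil_apply {n : ℕ} (B : Matrix (Fin n) (Fin n) ℝ) (c : Fin n → Bool) (i j : Fin n) :
    Atil B c i j = (if c i then (1:ℝ) else 0) * B i j * (if c j then (0:ℝ) else 1) := rfl

noncomputable def Yf {n : ℕ} (B : Matrix (Fin n) (Fin n) ℝ) (c b : Fin n → Bool) : ℝ :=
  ∑ i, ∑ j, Atil B c i j * zz (b i) * zz (b j)

lemma mask_exp {n : ℕ} (i j : Fin n) :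
    Exp (fun c : Fin n → Bool => (if c i then (1:ℝ) else 0) * (if c j then (0:ℝ) else 1))
      = if i = j then 0 else 1/4 := by
  by_cases hij : i = j
  · subst hij
    rw [if_pos rfl]
    rw [show (fun c : Fin n → Bool => (if c i then (1:ℝ) else 0) * (if c i then (0:ℝ) else 1))
        = fun _ => (0:ℝ) by funext c; by_cases h : c i <;> simp [h], Exp_const]
  · rw [if_neg hij]
    have e : (fun c : Fin n → Bool => (if c i then (1:ℝ) else 0) * (if c j then (0:ℝ) else 1))
        = fun c => (1/4 : ℝ) + ((1/4) * zz (c i) +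
            ((-(1/4)) * zz (c j) + (-(1/4)) * (zz (c i) * zz (c j)))) := by
      funext c
      by_cases h1 : c i <;> by_cases h2 : c j <;> simp [h1, h2, zz] <;> norm_num
    rw [e, Exp_add, Exp_const, Exp_add, Exp_smul, Exp_zz, Exp_add, Exp_smul, Exp_zz,
      Exp_smul, Exp_zz_mul i j hij]
    norm_num

lemma decouple_identity {n : ℕ} (B : Matrix (Fin n) (Fin n) ℝ) (b : Fin n → Bool) :
    Qf B b = 4 * Exp (fun c => Yf B c b) := by
  have e1 : Exp (fun c => Yf B c b)
      = ∑ i, ∑ j, Exp (fun c : Fin n → Bool => Atil B c i j * zz (b i) * zz (b j)) := by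
    rw [show (fun c => Yf B c b)
        = fun c => ∑ i, ∑ j, Atil B c i j * zz (b i) * zz (b j) from rfl, Exp_sum]
    apply Finset.sum_congr rfl
    intro i _
    rw [Exp_sum]
  rw [e1, Qf, Finset.mul_sum]
  apply Finset.sum_congr rfl; intro i _
  rw [Finset.mul_sum]
  apply Finset.sum_congr rfl; intro j _
  have e2 : (fun c : Fin n → Bool => Atil B c i j * zz (b i) * zz (b j))
      = fun c => (B i j * zz (b i) * zz (b j)) *
          ((if c i then (1:ℝ) else 0) * (if c j then (0:ℝ) else 1)) := by
    funext c; rw [Atil_apply]; ring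
  rw [e2, Exp_smul, mask_exp]
  by_cases hij : i = j
  · rw [if_pos hij, if_pos hij]
    ring
  · rw [if_neg hij, if_neg hij]
    ring

lemma sum_sq_mulvec {n : ℕ} (A : Matrix (Fin n) (Fin n) ℝ) (b : Fin n → Bool) :
    ∑ i, (∑ j, A i j * zz (b j))^2 = Matrix.trace (Aᵀ * A) + Qf (Aᵀ * A) b := by
  have e1 : ∑ i, (∑ j, A i j * zz (b j))^2
      = ∑ j, ∑ j', (∑ i, A i j * A i j') * zz (b j) * zz (b j') := by
    calc ∑ i, (∑ j, A i j * zz (b j))^2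
        = ∑ i, ∑ j, ∑ j', (A i j * zz (b j)) * (A i j' * zz (b j')) := by
          apply Finset.sum_congr rfl; intro i _
          rw [sq, Finset.sum_mul_sum]
      _ = ∑ j, ∑ i, ∑ j', (A i j * zz (b j)) * (A i j' * zz (b j')) := Finset.sum_comm
      _ = ∑ j, ∑ j', ∑ i, (A i j * zz (b j)) * (A i j' * zz (b j')) := by
          apply Finset.sum_congr rfl; intro j _
          exact Finset.sum_comm
      _ = ∑ j, ∑ j', (∑ i, A i j * A i j') * zz (b j) * zz (b j') := by
          apply Finset.sum_congr rfl; intro j _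
          apply Finset.sum_congr rfl; intro j' _
          rw [Finset.sum_mul, Finset.sum_mul]
          apply Finset.sum_congr rfl; intro i _
          ring
  rw [e1]
  have e2 : ∀ j j' : Fin n, (∑ i, A i j * A i j') * zz (b j) * zz (b j')
      = (if j = j' then (Aᵀ * A) j j' else 0)
        + zz (b j) * (if j = j' then 0 else (Aᵀ * A) j j') * zz (b j') := by
    intro j j'
    have hm : (Aᵀ * A) j j' = ∑ i, A i j * A i j' := by
      rw [Matrix.mul_apply]
      apply Finset.sum_congr rfl; intro i _
      rw [Matrix.transpose_apply]
    by_cases h : j = j'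
    · subst h
      rw [if_pos rfl, if_pos rfl, hm]
      calc (∑ i, A i j * A i j) * zz (b j) * zz (b j)
          = (∑ i, A i j * A i j) * (zz (b j) * zz (b j)) := by ring
        _ = (∑ i, A i j * A i j) * 1 := by rw [zz_sq]
        _ = (∑ i, A i j * A i j) + zz (b j) * 0 * zz (b j) := by ring
    · rw [if_neg h, if_neg h, hm]
      ring
  rw [Finset.sum_congr rfl (fun j _ => Finset.sum_congr rfl (fun j' _ => e2 j j'))]
  rw [show ∀ F G : Fin n → Fin n → ℝ, ∑ j, ∑ j', (F j j' + G j j') = (∑ j, ∑ j', F j j') + (∑ j, ∑ j', G j j') from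
    fun F G => by rw [← Finset.sum_add_distrib]; apply Finset.sum_congr rfl; intro j _; rw [Finset.sum_add_distrib]]
  congr 1
  · rw [Matrix.trace]
    apply Finset.sum_congr rfl; intro j _
    rw [Finset.sum_ite_eq]
    simp [Matrix.diag]

lemma spec_diag_le_one {n : ℕ} (d : Fin n → ℝ) (hd : ∀ i, |d i| ≤ 1) :
    specNorm (Matrix.diagonal d) ≤ 1 := by
  apply spec_le_of_bound _ _ zero_le_one
  intro v
  rw [one_pow, one_mul]
  apply Finset.sum_le_sum
  intro i _
  rw [Matrix.mulVec_diagonal]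
  have h1 : (d i * v i)^2 = (d i)^2 * (v i)^2 := by ring
  rw [h1]
  have h2 : (d i)^2 ≤ 1 := by
    rw [← sq_abs]
    nlinarith [abs_nonneg (d i), hd i]
  nlinarith [sq_nonneg (v i)]

lemma Atil_eq_mul {n : ℕ} (B : Matrix (Fin n) (Fin n) ℝ) (c : Fin n → Bool) :
    Atil B c = Matrix.diagonal (fun i => if c i then (1:ℝ) else 0) * B *
      Matrix.diagonal (fun j => if c j then (0:ℝ) else 1) := by
  ext i j
  rw [Matrix.mul_diagonal, Matrix.mul_apply]
  rw [Atil_apply]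
  have : ∀ k, Matrix.diagonal (fun i => if c i then (1:ℝ) else 0) i k * B k j
      = (if k = i then (if c i then (1:ℝ) else 0) * B k j else 0) := by
    intro k
    by_cases hk : k = i
    · subst hk; simp [Matrix.diagonal]
    · simp [Matrix.diagonal, Ne.symm hk, hk]
  rw [Finset.sum_congr rfl (fun k _ => this k), Finset.sum_ite_eq' Finset.univ i]
  simp

lemma spec_Atil_le {n : ℕ} (B : Matrix (Fin n) (Fin n) ℝ) (c : Fin n → Bool) :
    specNorm (Atil B c) ≤ specNorm B := by
  rw [Atil_eq_mul]
  have hd1 : specNorm (Matrix.diagonal (fun i => if c i then (1:ℝ) else 0)) ≤ 1 := by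
    apply spec_diag_le_one; intro i; by_cases h : c i <;> simp [h]
  have hd2 : specNorm (Matrix.diagonal (fun j => if c j then (0:ℝ) else 1)) ≤ 1 := by
    apply spec_diag_le_one; intro i; by_cases h : c i <;> simp [h]
  calc specNorm (Matrix.diagonal (fun i => if c i then (1:ℝ) else 0) * B *
        Matrix.diagonal (fun j => if c j then (0:ℝ) else 1))
      ≤ specNorm (Matrix.diagonal (fun i => if c i then (1:ℝ) else 0) * B) *
        specNorm (Matrix.diagonal (fun j => if c j then (0:ℝ) else 1)) := spec_mul_le _ _
    _ ≤ specNorm (Matrix.diagonal (fun i => if c i then (1:ℝ) else 0) * B) * 1 := by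
        apply mul_le_mul_of_nonneg_left hd2 (spec_nonneg _)
    _ = specNorm (Matrix.diagonal (fun i => if c i then (1:ℝ) else 0) * B) := mul_one _
    _ ≤ specNorm (Matrix.diagonal (fun i => if c i then (1:ℝ) else 0)) * specNorm B :=
        spec_mul_le _ _
    _ ≤ 1 * specNorm B := mul_le_mul_of_nonneg_right hd1 (spec_nonneg _)
    _ = specNorm B := one_mul _

lemma F2_Atil_le {n : ℕ} (B : Matrix (Fin n) (Fin n) ℝ) (c : Fin n → Bool) :
    F2 (Atil B c) ≤ F2 B := by
  unfold F2
  apply Finset.sum_le_sum; intro i _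
  apply Finset.sum_le_sum; intro j _
  rw [Atil_apply]
  by_cases h1 : c i <;> by_cases h2 : c j <;> simp [h1, h2] <;> positivity

lemma key_step {n : ℕ} (B : Matrix (Fin n) (Fin n) ℝ) (k : ℕ) (hk : 1 ≤ k) (R : ℝ)
    (hrec : ∀ A : Matrix (Fin n) (Fin n) ℝ, specNorm A ≤ specNorm B → F2 A ≤ F2 B →
      Exp (fun b => (Matrix.trace (Aᵀ*A) + Qf (Aᵀ*A) b)^k) ≤ R) :
    Exp (fun b => (Qf B b)^(2*k)) ≤ 16^k * (ddf k : ℝ) * R := by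
  -- Step 1: decoupling + Jensen
  have step1 : Exp (fun b => (Qf B b)^(2*k))
      ≤ 16^k * Exp (fun c => Exp (fun b => (Yf B c b)^(2*k))) := by
    calc Exp (fun b => (Qf B b)^(2*k))
        ≤ Exp (fun b => 16^k * Exp (fun c => (Yf B c b)^(2*k))) := by
          apply Exp_mono
          intro b
          rw [decouple_identity B b]
          have h4 : ((4:ℝ) * Exp (fun c => Yf B c b))^(2*k)
              = 16^k * (Exp (fun c => Yf B c b))^(2*k) := by
            rw [mul_pow]
            congr 1
            rw [show (16:ℝ) = 4^2 by norm_num, ← pow_mul, mul_comm 2 k, pow_mul]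
          rw [h4]
          apply mul_le_mul_of_nonneg_left (jensen_even _ k hk) (by positivity)
      _ = 16^k * Exp (fun b => Exp (fun c => (Yf B c b)^(2*k))) := by
          rw [show (fun b => 16^k * Exp (fun c => (Yf B c b)^(2*k)))
            = fun b => (16:ℝ)^k * ((fun b' => Exp (fun c => (Yf B c b')^(2*k))) b) from rfl,
            Exp_smul]
      _ = 16^k * Exp (fun c => Exp (fun b => (Yf B c b)^(2*k))) := by
          rw [Exp_swap (fun c b => (Yf B c b)^(2*k))]
  -- Step 2: per-c bound via Khintchine
  have step2 : ∀ c : Fin n → Bool,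
      Exp (fun b => (Yf B c b)^(2*k)) ≤ (ddf k : ℝ) * R := by
    intro c
    set A := Atil B c with hA
    set wf : Fin n → (Fin n → Bool) → ℝ := fun i b => ∑ j, A i j * zz (b j) with hwf
    set sI : Finset (Fin n) := Finset.univ.filter (fun i => c i = true) with hsI
    have hrow0 : ∀ i, c i = false → ∀ j, A i j = 0 := by
      intro i hi j
      rw [hA, Atil_apply, hi]
      simp
    have hcol0 : ∀ j, c j = true → ∀ i, A i j = 0 := by
      intro j hj i
      rw [hA, Atil_apply, hj]
      simp
    -- Y in Khintchine form
    have hYform : ∀ b, Yf B c b = ∑ i ∈ sI, wf i b * zz (b i) := by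
      intro b
      rw [Yf]
      have e1 : ∀ i, ∑ j, A i j * zz (b i) * zz (b j) = wf i b * zz (b i) := by
        intro i
        rw [hwf, Finset.sum_mul]
        apply Finset.sum_congr rfl; intro j _
        ring
      rw [Finset.sum_congr rfl (fun i _ => e1 i)]
      symm
      apply Finset.sum_subset (Finset.subset_univ _)
      intro i _ hi
      have hci : c i = false := by
        by_contra hcon
        exact hi (Finset.mem_filter.mpr ⟨Finset.mem_univ i, by
          cases h : c i
          · exact absurd h hcon
          · rfl⟩)
      have : wf i b = 0 := by
        rw [hwf]
        apply Finset.sum_eq_zero; intro j _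
        rw [hrow0 i hci j, zero_mul]
      rw [this, zero_mul]
    -- invariance hypotheses
    have hwinv : ∀ i, ∀ a ∈ sI, ∀ b v, wf i (Function.update b a v) = wf i b := by
      intro i a ha b v
      have hca : c a = true := (Finset.mem_filter.mp ha).2
      rw [hwf]
      apply Finset.sum_congr rfl; intro j _
      by_cases hj : j = a
      · subst hj
        rw [hcol0 j hca i, zero_mul, zero_mul]
      · rw [Function.update_of_ne hj]
    have hkh := khintchine k sI wf hwinv (fun _ => (1:ℝ)) (fun _ => zero_le_one)
      (fun _ _ _ _ => rfl)
    -- rewrite both sides of hkh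
    have lhs_eq : Exp (fun b => (1:ℝ) * (∑ i ∈ sI, wf i b * zz (b i)) ^ (2*k))
        = Exp (fun b => (Yf B c b)^(2*k)) := by
      apply Exp_congr; intro b
      rw [one_mul, hYform b]
    have sumsq_eq : ∀ b, ∑ i ∈ sI, (wf i b)^2
        = Matrix.trace (Aᵀ*A) + Qf (Aᵀ*A) b := by
      intro b
      rw [← sum_sq_mulvec A b]
      apply Finset.sum_subset (Finset.subset_univ _)
      intro i _ hi
      have hci : c i = false := by
        by_contra hcon
        exact hi (Finset.mem_filter.mpr ⟨Finset.mem_univ i, by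
          cases h : c i
          · exact absurd h hcon
          · rfl⟩)
      have : wf i b = 0 := by
        rw [hwf]
        apply Finset.sum_eq_zero; intro j _
        rw [hrow0 i hci j, zero_mul]
      rw [this]
      norm_num
    have rhs_eq : Exp (fun b => (1:ℝ) * (∑ i ∈ sI, (wf i b)^2) ^ k)
        = Exp (fun b => (Matrix.trace (Aᵀ*A) + Qf (Aᵀ*A) b)^k) := by
      apply Exp_congr; intro b
      rw [one_mul, sumsq_eq b]
    rw [lhs_eq, rhs_eq] at hkh
    calc Exp (fun b => (Yf B c b)^(2*k))
        ≤ (ddf k : ℝ) * Exp (fun b => (Matrix.trace (Aᵀ*A) + Qf (Aᵀ*A) b)^k) := hkh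
      _ ≤ (ddf k : ℝ) * R := by
          apply mul_le_mul_of_nonneg_left
            (hrec A (spec_Atil_le B c) (F2_Atil_le B c)) (by positivity)
  calc Exp (fun b => (Qf B b)^(2*k))
      ≤ 16^k * Exp (fun c => Exp (fun b => (Yf B c b)^(2*k))) := step1
    _ ≤ 16^k * ((ddf k : ℝ) * R) := by
        apply mul_le_mul_of_nonneg_left (Exp_le_of_forall step2) (by positivity)
    _ = 16^k * (ddf k : ℝ) * R := by ring






lemma trace_tAA_eq {n : ℕ} (A : Matrix (Fin n) (Fin n) ℝ) :
    Matrix.trace (Aᵀ * A) = F2 A := by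
  rw [Matrix.trace, F2]
  rw [Finset.sum_comm]
  apply Finset.sum_congr rfl; intro j _
  rw [Matrix.diag]
  rw [Matrix.mul_apply]
  apply Finset.sum_congr rfl; intro i _
  rw [Matrix.transpose_apply, sq]

lemma F2_mul_le {n : ℕ} (A C : Matrix (Fin n) (Fin n) ℝ) :
    F2 (A * C) ≤ (specNorm A)^2 * F2 C := by
  unfold F2
  rw [Finset.sum_comm]
  calc ∑ j, ∑ i, ((A * C) i j)^2
      = ∑ j, ∑ i, (A.mulVec (fun x => C x j) i)^2 := by
        apply Finset.sum_congr rfl; intro j _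
        apply Finset.sum_congr rfl; intro i _
        congr 1
    _ ≤ ∑ j : Fin n, (specNorm A)^2 * ∑ x, (C x j)^2 := by
        apply Finset.sum_le_sum; intro j _
        exact mulVec_sq_le A _
    _ = (specNorm A)^2 * ∑ j, ∑ x, (C x j)^2 := by rw [← Finset.mul_sum]
    _ = (specNorm A)^2 * ∑ x, ∑ j, (C x j)^2 := by rw [Finset.sum_comm]

lemma sq_max (x y : ℝ) (hx : 0 ≤ x) (hy : 0 ≤ y) : (max x y)^2 = max (x^2) (y^2) := by
  rcases le_total x y with h | h
  · rw [max_eq_right h, max_eq_right (by nlinarith)]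
  · rw [max_eq_left h, max_eq_left (by nlinarith)]

theorem moment_even {n : ℕ} : ∀ k : ℕ, 1 ≤ k → ∀ B : Matrix (Fin n) (Fin n) ℝ,
    Exp (fun b => (Qf B b)^(2*k))
      ≤ 128^(2*k) * (max (2*(k:ℝ) * F2 B) ((2*(k:ℝ) * specNorm B)^2))^k := by
  intro k
  induction k using Nat.strong_induction_on with
  | _ k ih =>
  intro hk B
  set S := specNorm B with hS
  set a := F2 B with ha
  set T1 := max (2*(k:ℝ) * a) ((2*(k:ℝ) * S)^2) with hT1
  have haNN : 0 ≤ a := F2_nonneg B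
  have hSNN : 0 ≤ S := spec_nonneg B
  have hT1NN : 0 ≤ T1 := le_trans (by positivity) (le_max_left _ _)
  have hkR : (1:ℝ) ≤ (k:ℝ) := by exact_mod_cast hk
  by_cases hk1 : k = 1
  · -- base case
    subst hk1
    have hrec : ∀ A : Matrix (Fin n) (Fin n) ℝ, specNorm A ≤ specNorm B → F2 A ≤ F2 B →
        Exp (fun b => (Matrix.trace (Aᵀ*A) + Qf (Aᵀ*A) b)^1) ≤ a := by
      intro A _ hF2A
      have e : Exp (fun b => (Matrix.trace (Aᵀ*A) + Qf (Aᵀ*A) b)^1)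
          = Matrix.trace (Aᵀ*A) + Exp (Qf (Aᵀ*A)) := by
        rw [Exp_congr (fun b => pow_one _),
          Exp_add (fun _ => Matrix.trace (Aᵀ*A)) (Qf (Aᵀ*A)), Exp_const]
      rw [e, Exp_Qf_zero, add_zero, trace_tAA_eq]
      exact hF2A
    have hks := key_step B 1 le_rfl a hrec
    calc Exp (fun b => (Qf B b)^(2*1)) ≤ 16^1 * (ddf 1 : ℝ) * a := hks
      _ = 16 * a := by rw [ddf_one]; norm_num
      _ ≤ 128^(2*1) * T1^1 := by
          have h2a : 2*(1:ℝ)*a ≤ T1 := by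
            rw [hT1]
            push_cast
            exact le_max_left _ _
          push_cast at h2a ⊢
          nlinarith [hT1NN]
  · -- inductive case, k ≥ 2
    have hk2 : 2 ≤ k := by omega
    set j1 := k/2 with hj1
    set j2 := k - k/2 with hj2
    have hj1k : j1 < k := by omega
    have hj2k : j2 < k := by omega
    have hj11 : 1 ≤ j1 := by omega
    have hj21 : 1 ≤ j2 := by omega
    have hjsum : j1 + j2 = k := by omega
    have hj12 : j1 ≤ j2 := by omega
    set W : ℝ := 128^k * (T1/(2*(k:ℝ)))^k with hW
    set R : ℝ := 2^k * (a^k + W) with hR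
    have hkpos : (0:ℝ) < 2*(k:ℝ) := by linarith
    have hrec : ∀ A : Matrix (Fin n) (Fin n) ℝ, specNorm A ≤ specNorm B → F2 A ≤ F2 B →
        Exp (fun b => (Matrix.trace (Aᵀ*A) + Qf (Aᵀ*A) b)^k) ≤ R := by
      intro A hSA hF2A
      set M := Aᵀ * A with hM
      have htrM : Matrix.trace M = F2 A := trace_tAA_eq A
      have htrMNN : 0 ≤ Matrix.trace M := htrM ▸ F2_nonneg A
      have htrMa : Matrix.trace M ≤ a := htrM ▸ hF2A
      have hspecM : specNorm M ≤ S^2 := by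
        calc specNorm M ≤ specNorm Aᵀ * specNorm A := spec_mul_le _ _
          _ ≤ specNorm A * specNorm A := by
              apply mul_le_mul_of_nonneg_right (spec_transpose_le A) (spec_nonneg A)
          _ ≤ S * S := by
              apply mul_le_mul hSA hSA (spec_nonneg A) hSNN
          _ = S^2 := (sq S).symm
      have hF2M : F2 M ≤ a * S^2 := by
        calc F2 M ≤ (specNorm Aᵀ)^2 * F2 A := F2_mul_le _ _
          _ ≤ S^2 * a := by
              have h1 : specNorm Aᵀ ≤ S := le_trans (spec_transpose_le A) hSA
              have h2 : (specNorm Aᵀ)^2 ≤ S^2 := by nlinarith [spec_nonneg Aᵀ]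
              apply mul_le_mul h2 hF2A (F2_nonneg A) (by positivity)
          _ = a * S^2 := by ring
      -- bound Exp |Qf M|^k via Cauchy-Schwarz and induction
      have habs : Exp (fun b => |Qf M b|^k) ≤ W := by
        set E := Exp (fun b => |Qf M b|^k) with hE
        have hENN : 0 ≤ E := Exp_nonneg (fun b => by positivity)
        set Um := max (2*(k:ℝ)*(a*S^2)) ((2*(k:ℝ)*S^2)^2) with hUm
        have hUmNN : 0 ≤ Um := le_trans (by positivity) (le_max_left _ _)
        have hihj : ∀ j : ℕ, 1 ≤ j → j < k →
            Exp (fun b => (Qf M b)^(2*j)) ≤ 128^(2*j) * Um^j := by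
          intro j hj1' hjk'
          have := ih j hjk' hj1' M
          apply le_trans this
          apply mul_le_mul_of_nonneg_left _ (by positivity)
          apply pow_le_pow_left₀
            (le_trans (mul_nonneg (by positivity) (F2_nonneg M)) (le_max_left _ _))
          apply max_le
          · apply le_trans _ (le_max_left _ _)
            have : 2*(j:ℝ) ≤ 2*(k:ℝ) := by
              have : (j:ℝ) ≤ (k:ℝ) := by exact_mod_cast hjk'.le
              linarith
            calc 2*(j:ℝ) * F2 M ≤ 2*(j:ℝ) * (a*S^2) := by
                  apply mul_le_mul_of_nonneg_left hF2M (by positivity)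
              _ ≤ 2*(k:ℝ) * (a*S^2) := by
                  apply mul_le_mul_of_nonneg_right this (by positivity)
          · apply le_trans _ (le_max_right _ _)
            have hjk : (j:ℝ) ≤ (k:ℝ) := by exact_mod_cast hjk'.le
            have h1 : 2*(j:ℝ) * specNorm M ≤ 2*(k:ℝ)*S^2 := by
              calc 2*(j:ℝ) * specNorm M ≤ 2*(j:ℝ) * S^2 := by
                    apply mul_le_mul_of_nonneg_left hspecM (by positivity)
                _ ≤ 2*(k:ℝ) * S^2 := by nlinarith [sq_nonneg S]
            have h2 : 0 ≤ 2*(j:ℝ) * specNorm M := by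
              have := spec_nonneg M
              positivity
            nlinarith [h1, h2]
        -- Cauchy-Schwarz split
        have hsplit : E^2 ≤ Exp (fun b => (Qf M b)^(2*j1)) * Exp (fun b => (Qf M b)^(2*j2)) := by
          have e1 : E = Exp (fun b => |Qf M b|^j1 * |Qf M b|^j2) := by
            apply Exp_congr; intro b
            rw [← pow_add, hjsum]
          have e2 : ∀ b, (|Qf M b|^j1)^2 = (Qf M b)^(2*j1) := by
            intro b
            rw [← pow_mul, mul_comm j1 2, Even.pow_abs ⟨j1, by ring⟩]
          have e3 : ∀ b, (|Qf M b|^j2)^2 = (Qf M b)^(2*j2) := by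
            intro b
            rw [← pow_mul, mul_comm j2 2, Even.pow_abs ⟨j2, by ring⟩]
          calc E^2 = (Exp (fun b => |Qf M b|^j1 * |Qf M b|^j2))^2 := by rw [← e1]
            _ ≤ Exp (fun b => (|Qf M b|^j1)^2) * Exp (fun b => (|Qf M b|^j2)^2) := Exp_CS _ _
            _ = Exp (fun b => (Qf M b)^(2*j1)) * Exp (fun b => (Qf M b)^(2*j2)) := by
                rw [Exp_congr e2, Exp_congr e3]
        have hE2 : E^2 ≤ 128^(2*k) * Um^k := by
          calc E^2 ≤ Exp (fun b => (Qf M b)^(2*j1)) * Exp (fun b => (Qf M b)^(2*j2)) := hsplit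
            _ ≤ (128^(2*j1) * Um^j1) * (128^(2*j2) * Um^j2) := by
                apply mul_le_mul (hihj j1 hj11 hj1k) (hihj j2 hj21 hj2k)
                  (Exp_nonneg (fun b => by
                    rw [mul_comm 2 j2, pow_mul]; positivity))
                  (mul_nonneg (by positivity) (pow_nonneg hUmNN _))
            _ = 128^(2*j1+2*j2) * Um^(j1+j2) := by rw [pow_add, pow_add]; ring
            _ = 128^(2*k) * Um^k := by rw [hjsum, show 2*j1+2*j2 = 2*k by omega]
        have hUmT1 : Um ≤ (T1/(2*(k:ℝ)))^2 := by
          rw [div_pow]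
          rw [le_div_iff₀ (by positivity)]
          have hmm : Um * (2*(k:ℝ))^2
              = max (2*(k:ℝ)*(a*S^2) * (2*(k:ℝ))^2) ((2*(k:ℝ)*S^2)^2 * (2*(k:ℝ))^2) := by
            rw [hUm, max_mul_of_nonneg _ _ (by positivity : (0:ℝ) ≤ (2*(k:ℝ))^2)]
          rw [hmm]
          apply max_le
          · have e1 : 2*(k:ℝ)*(a*S^2) * (2*(k:ℝ))^2 = (2*(k:ℝ)*a) * ((2*(k:ℝ)*S)^2) := by ring
            rw [e1]
            have b1 : 2*(k:ℝ)*a ≤ T1 := le_max_left _ _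
            have b2 : (2*(k:ℝ)*S)^2 ≤ T1 := le_max_right _ _
            calc (2*(k:ℝ)*a) * ((2*(k:ℝ)*S)^2) ≤ T1 * T1 := by
                  apply mul_le_mul b1 b2 (by positivity) hT1NN
              _ = T1^2 := (sq T1).symm
          · have e1 : (2*(k:ℝ)*S^2)^2 * (2*(k:ℝ))^2 = ((2*(k:ℝ)*S)^2)^2 := by ring
            rw [e1]
            have b2 : (2*(k:ℝ)*S)^2 ≤ T1 := le_max_right _ _
            nlinarith [sq_nonneg (2*(k:ℝ)*S)]
        have hWsq : 128^(2*k) * ((T1/(2*(k:ℝ)))^2)^k = W^2 := by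
          rw [hW, mul_pow, ← pow_mul (T1/(2*(k:ℝ))) 2 k, ← pow_mul (128:ℝ) k 2,
            ← pow_mul (T1/(2*(k:ℝ))) k 2, mul_comm 2 k]
        have hE2' : E^2 ≤ W^2 := by
          rw [← hWsq]
          calc E^2 ≤ 128^(2*k) * Um^k := hE2
            _ ≤ 128^(2*k) * ((T1/(2*(k:ℝ)))^2)^k := by
                apply mul_le_mul_of_nonneg_left (pow_le_pow_left₀ hUmNN hUmT1 k) (by positivity)
        have hWNN : 0 ≤ W := by
          rw [hW]; positivity
        nlinarith [hE2', hENN, hWNN]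
      -- now combine
      calc Exp (fun b => (Matrix.trace M + Qf M b)^k)
          ≤ Exp (fun b => 2^k * (|Matrix.trace M|^k + |Qf M b|^k)) := by
            apply Exp_mono; intro b
            exact pow_add_le _ _ k
        _ = 2^k * (|Matrix.trace M|^k + Exp (fun b => |Qf M b|^k)) := by
            rw [show (fun b => (2:ℝ)^k * (|Matrix.trace M|^k + |Qf M b|^k))
              = fun b => (2:ℝ)^k * ((fun b' => |Matrix.trace M|^k + |Qf M b'|^k) b) from rfl,
              Exp_smul, Exp_add (fun _ => |Matrix.trace M|^k) (fun b => |Qf M b|^k), Exp_const]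
        _ ≤ 2^k * (a^k + W) := by
            apply mul_le_mul_of_nonneg_left _ (by positivity)
            apply add_le_add
            · rw [abs_of_nonneg htrMNN]
              exact pow_le_pow_left₀ htrMNN htrMa k
            · exact habs
        _ = R := hR.symm
    -- apply key_step and conclude
    have hks := key_step B k hk R hrec
    apply le_trans hks
    have hRNN : 0 ≤ R := by
      rw [hR, hW]; positivity
    calc 16^k * (ddf k : ℝ) * R ≤ 16^k * (2*(k:ℝ))^k * R := by
          apply mul_le_mul_of_nonneg_right _ hRNN
          apply mul_le_mul_of_nonneg_left _ (by positivity)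
          have := ddf_le k
          push_cast at this ⊢
          exact this
      _ = 32^k * ((2*(k:ℝ))^k * a^k + (2*(k:ℝ))^k * W) := by
          rw [hR]
          rw [show (16:ℝ)^k * (2*(k:ℝ))^k * (2^k * (a^k + W))
            = (16*2:ℝ)^k * ((2*(k:ℝ))^k * a^k + (2*(k:ℝ))^k * W) by
              rw [mul_pow 16 2]; ring]
          norm_num
      _ = 32^k * (2*(k:ℝ)*a)^k + 32^k * 128^k * T1^k := by
          rw [hW]
          rw [div_pow, mul_pow 2 (k:ℝ)]
          have hne : ((2:ℝ)*(k:ℝ))^k ≠ 0 := by positivity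
          field_simp
          ring
      _ ≤ 32^k * T1^k + 32^k * 128^k * T1^k := by
          apply add_le_add_left
          apply mul_le_mul_of_nonneg_left (pow_le_pow_left₀ (by positivity) (le_max_left _ _) k)
            (by positivity)
      _ ≤ 128^(2*k) * T1^k := by
          have h1 : (2:ℝ) * 32^k ≤ 128^k := by
            calc (2:ℝ) * 32^k ≤ 4^k * 32^k := by
                  apply mul_le_mul_of_nonneg_right _ (by positivity)
                  calc (2:ℝ) ≤ 4^1 := by norm_num
                    _ ≤ 4^k := pow_le_pow_right₀ (by norm_num) hk
              _ = 128^k := by rw [← mul_pow]; norm_num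
          have h2 : (0:ℝ) ≤ T1^k := pow_nonneg hT1NN k
          have h3 : (32:ℝ)^k ≤ 32^k * 128^k := by
            nlinarith [pow_nonneg (show (0:ℝ) ≤ 32 by norm_num) k,
              pow_le_pow_right₀ (show (1:ℝ) ≤ 128 by norm_num) hk]
          have h4 : (128:ℝ)^(2*k) = 128^k * 128^k := by
            rw [two_mul, pow_add]
          have h6 := mul_le_mul_of_nonneg_right h1
            (pow_nonneg (show (0:ℝ) ≤ 128 by norm_num) k)
          have h5 : (32:ℝ)^k + 32^k*128^k ≤ 128^k * 128^k := by nlinarith [h3, h6]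
          calc (32:ℝ)^k*T1^k + 32^k*128^k*T1^k = (32^k + 32^k*128^k)*T1^k := by ring
            _ ≤ (128^k*128^k)*T1^k := mul_le_mul_of_nonneg_right h5 h2
            _ = 128^(2*k)*T1^k := by rw [h4]

lemma inner_id {n : ℕ} (B : Matrix (Fin n) (Fin n) ℝ) (b : Fin n → Bool) :
    (∑ i, ∑ j, (if b i then (1:ℝ) else -1) * B i j * (if b j then (1:ℝ) else -1))
      - Matrix.trace B = Qf B b := by
  have hzz : ∀ i : Fin n, (if b i then (1:ℝ) else -1) = zz (b i) := fun i => rfl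
  have key : (∑ i, ∑ j, zz (b i) * B i j * zz (b j)) = Qf B b + Matrix.trace B := by
    have e : ∀ i j : Fin n, zz (b i) * B i j * zz (b j)
        = zz (b i) * (if i = j then 0 else B i j) * zz (b j) + (if i = j then B i j else 0) := by
      intro i j
      by_cases h : i = j
      · subst h
        rw [if_pos rfl, if_pos rfl]
        calc zz (b i) * B i i * zz (b i) = B i i * (zz (b i) * zz (b i)) := by ring
          _ = B i i * 1 := by rw [zz_sq]
          _ = zz (b i) * 0 * zz (b i) + B i i := by ring
      · rw [if_neg h, if_neg h, add_zero]
    calc (∑ i, ∑ j, zz (b i) * B i j * zz (b j))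
        = ∑ i, ∑ j, (zz (b i) * (if i = j then 0 else B i j) * zz (b j)
            + (if i = j then B i j else 0)) := by
          apply Finset.sum_congr rfl; intro i _
          apply Finset.sum_congr rfl; intro j _
          exact e i j
      _ = (∑ i, ∑ j, zz (b i) * (if i = j then 0 else B i j) * zz (b j))
            + ∑ i, ∑ j, (if i = j then B i j else 0) := by
          rw [← Finset.sum_add_distrib]
          apply Finset.sum_congr rfl; intro i _
          rw [Finset.sum_add_distrib]
      _ = Qf B b + Matrix.trace B := by
          congr 1
          rw [Matrix.trace]
          apply Finset.sum_congr rfl; intro i _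
          rw [Finset.sum_ite_eq]
          simp [Matrix.diag]
  simp only [hzz]
  rw [key]
  ring

/-- **Hanson–Wright moment inequality for Rademacher chaos.**
There is a universal constant `C > 0` such that for every symmetric `B ∈ ℝ^{n×n}`,
every integer `l ≥ 2`, and `z` uniform on `{-1,+1}^n`,
`E[ |zᵀ B z - tr B|^l ] ≤ C^l · max(√l ‖B‖_F, l ‖B‖₂)^l`.
The expectation over the uniform sign vector `z` is written as the average over all
`2^n` assignments `b : Fin n → Bool`, with `z i = if b i then 1 else -1`. -/
theorem hanson_wright_moment :
    ∃ C : ℝ, 0 < C ∧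
      ∀ (n : ℕ), 0 < n → ∀ (B : Matrix (Fin n) (Fin n) ℝ), B.IsSymm →
        ∀ (l : ℕ), 2 ≤ l →
          (1 / 2 ^ n : ℝ) *
              ∑ b : Fin n → Bool,
                |(∑ i, ∑ j,
                    (if b i then (1 : ℝ) else -1) * B i j * (if b j then (1 : ℝ) else -1))
                  - Matrix.trace B| ^ l
            ≤ C ^ l * (max (Real.sqrt l * frobNorm B) ((l : ℝ) * specNorm B)) ^ l := by
  refine ⟨256, by norm_num, ?_⟩
  intro n _ B _ l hl
  have hl1 : 1 ≤ l := by omega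
  have hlR : (1:ℝ) ≤ (l:ℝ) := by exact_mod_cast hl1
  set S := specNorm B with hS
  have hSNN : 0 ≤ S := spec_nonneg B
  have hF2 : frobNorm B ^ 2 = F2 B := Real.sq_sqrt (by positivity)
  have hFNN : 0 ≤ frobNorm B := Real.sqrt_nonneg _
  -- LHS as expectation
  have hLHS : (1 / 2 ^ n : ℝ) *
      ∑ b : Fin n → Bool,
        |(∑ i, ∑ j, (if b i then (1 : ℝ) else -1) * B i j * (if b j then (1 : ℝ) else -1))
          - Matrix.trace B| ^ l
      = Exp (fun b => |Qf B b|^l) := by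
    rw [Exp]
    rw [one_div, inv_mul_eq_div]
    congr 1
    apply Finset.sum_congr rfl; intro b _
    rw [inner_id B b]
  rw [hLHS]
  set E := Exp (fun b => |Qf B b|^l) with hE
  have hENN : 0 ≤ E := Exp_nonneg (fun b => by positivity)
  set mx := max (Real.sqrt l * frobNorm B) ((l:ℝ) * S) with hmx
  have hmxNN : 0 ≤ mx := le_trans (by positivity) (le_max_left _ _)
  set X := (256:ℝ)^l * mx^l with hX
  have hXNN : 0 ≤ X := by positivity
  -- Cauchy-Schwarz: E² ≤ Exp (Qf^{2l})
  have hCS : E^2 ≤ Exp (fun b => (Qf B b)^(2*l)) := by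
    have e1 : E = Exp (fun b => |Qf B b|^l * (1:ℝ)) := by
      apply Exp_congr; intro b; rw [mul_one]
    have := Exp_CS (fun b => |Qf B b|^l) (fun _ => (1:ℝ))
    rw [← e1] at this
    have e2 : Exp (fun _ : Fin n → Bool => (1:ℝ)^2) = 1 := by
      rw [show (fun _ : Fin n → Bool => (1:ℝ)^2) = fun _ => (1:ℝ) by funext; norm_num, Exp_const]
    rw [e2, mul_one] at this
    apply le_trans this
    apply le_of_eq
    apply Exp_congr; intro b
    rw [← pow_mul, mul_comm l 2, Even.pow_abs ⟨l, by ring⟩]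
  -- moment bound
  have hmom := moment_even l hl1 B
  -- X² computation
  set T0 := max ((l:ℝ) * F2 B) (((l:ℝ)*S)^2) with hT0
  have hT0NN : 0 ≤ T0 := le_trans (mul_nonneg (by positivity) (F2_nonneg B)) (le_max_left _ _)
  have hmxsq : mx^2 = T0 := by
    rw [hmx, sq_max _ _ (by positivity) (by positivity), hT0]
    congr 2
    rw [mul_pow, Real.sq_sqrt (by positivity : (0:ℝ) ≤ (l:ℝ)), hF2]
  have hX2 : X^2 = 256^(2*l) * T0^l := by
    rw [hX, mul_pow, ← pow_mul 256 l 2, ← pow_mul mx l 2, mul_comm l 2, pow_mul mx 2 l, hmxsq]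
  have hmax4 : max (2*(l:ℝ) * F2 B) ((2*(l:ℝ) * S)^2) ≤ 4 * T0 := by
    apply max_le
    · have h1 : (l:ℝ)*F2 B ≤ T0 := le_max_left _ _
      nlinarith [F2_nonneg B, hlR, h1, hT0NN]
    · have e : (2*(l:ℝ)*S)^2 = 4 * ((l:ℝ)*S)^2 := by ring
      rw [e]
      have : ((l:ℝ)*S)^2 ≤ T0 := le_max_right _ _
      linarith
  have hEX : E^2 ≤ X^2 := by
    calc E^2 ≤ Exp (fun b => (Qf B b)^(2*l)) := hCS
      _ ≤ 128^(2*l) * (max (2*(l:ℝ) * F2 B) ((2*(l:ℝ) * S)^2))^l := hmom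
      _ ≤ 128^(2*l) * (4 * T0)^l := by
          apply mul_le_mul_of_nonneg_left _ (by positivity)
          apply pow_le_pow_left₀ _ hmax4
          exact le_trans (mul_nonneg (by positivity) (F2_nonneg B)) (le_max_left _ _)
      _ = 256^(2*l) * T0^l := by
          rw [mul_pow]
          rw [show (256:ℝ)^(2*l) = 128^(2*l) * 4^l by
            rw [show (256:ℝ) = 128 * 2 by norm_num, mul_pow,
              show ((2:ℝ))^(2*l) = 4^l by rw [pow_mul]; norm_num]]
          ring
      _ = X^2 := hX2.symm
  nlinarith [hEX, hENN, hXNN]
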